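/- Fix coprime positive integers k, l with 1 ≤ l < k, and let Q_i denote the i-th prime congruent to l modulo k. For every integer h > 1, there exists a positive integer N such that Q_{n+1}^h < Q_1 · Q_2 · ⋯ · Q_n for all n ≥ N. -/

import Mathlib

set_option linter.unusedSectionVars false
set_option maxHeartbeats 1000000

open ArithmeticFunction vonMangoldt Filter Complex Finset

namespace Stmt15

variable {q : ℕ} [NeZero q] {a : ZMod q}

lemma summable_rc (a : ZMod q) {x : ℝ} (hx : 1 < x) :
    Summable fun n : ℕ ↦ residueClass a n / (n : ℝ) ^ x :=
  LSeries.summable_real_of_abscissaOfAbsConv_lt <|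
    (abscissaOfAbsConv_residueClass_le_one a).trans_lt <| mod_cast hx

lemma two_sided_bound (ha : IsUnit a) :
    ∃ C : ℝ, 0 ≤ C ∧ ∀ {x : ℝ}, x ∈ Set.Ioc (1:ℝ) 2 →
      |(∑' n, residueClass a n / (n : ℝ) ^ x) - (q.totient : ℝ)⁻¹ / (x - 1)| ≤ C := by
  have H {x : ℝ} (hx : 1 < x) :
      ∑' n, residueClass a n / (n : ℝ) ^ x =
        (LFunctionResidueClassAux a x).re + (q.totient : ℝ)⁻¹ / (x - 1) := by
    refine ofReal_injective ?_
    simp only [ofReal_tsum, ofReal_div, ofReal_cpow (Nat.cast_nonneg _), ofReal_natCast,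
      ofReal_add, ofReal_inv, ofReal_sub, ofReal_one]
    simp_rw [← LFunctionResidueClassAux_real ha hx,
      eqOn_LFunctionResidueClassAux ha <| Set.mem_setOf.mpr (ofReal_re x ▸ hx), sub_add_cancel,
      LSeries, LSeries.term]
    refine tsum_congr fun n ↦ ?_
    split_ifs with hn
    · simp only [hn, residueClass_apply_zero, ofReal_zero, zero_div]
    · rfl
  have hc : ContinuousOn (fun x : ℝ ↦ (LFunctionResidueClassAux a x).re) (Set.Icc 1 2) :=
    Complex.continuous_re.continuousOn.comp (t := Set.univ) (continuousOn_LFunctionResidueClassAux a)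
      (fun ⦃x⦄ a ↦ trivial) |>.comp Complex.continuous_ofReal.continuousOn fun x hx ↦ by
        simpa only [Set.mem_setOf_eq, ofReal_re] using hx.1
  obtain ⟨C, hC⟩ := isCompact_Icc.exists_bound_of_continuousOn hc
  refine ⟨max C 0, le_max_right _ _, fun {x} hx ↦ ?_⟩
  rw [H hx.1, add_sub_cancel_right]
  have h2 := hC x (Set.mem_Icc_of_Ioc hx)
  rw [Real.norm_eq_abs] at h2
  exact h2.trans (le_max_left _ _)

noncomputable def A (a : ZMod q) (N : ℕ) : ℝ := ∑ n ∈ Finset.range N, residueClass a n / n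

noncomputable def Ap (a : ZMod q) (N : ℕ) : ℝ :=
  ∑ n ∈ Finset.range N, (if n.Prime then residueClass a n else 0) / n

noncomputable def th (a : ZMod q) (N : ℕ) : ℝ :=
  ∑ n ∈ Finset.range N, (if n.Prime then residueClass a n else 0)

noncomputable def B (a : ZMod q) : ℝ := ∑' n : ℕ, (if n.Prime then 0 else residueClass a n) / n

lemma g_nonneg (n : ℕ) : 0 ≤ (if n.Prime then residueClass a n else 0) := by
  split_ifs
  exacts [residueClass_nonneg a n, le_rfl]

lemma B_nonneg : 0 ≤ B a :=
  tsum_nonneg fun n ↦ div_nonneg (by split_ifs; exacts [le_rfl, residueClass_nonneg a n])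
    n.cast_nonneg

lemma Ap_le_A (N : ℕ) : Ap a N ≤ A a N := by
  refine Finset.sum_le_sum fun n _ ↦ ?_
  split_ifs with hp
  · exact le_rfl
  · simpa using div_nonneg (residueClass_nonneg a n) n.cast_nonneg

lemma A_le_Ap_add_B (N : ℕ) : A a N ≤ Ap a N + B a := by
  have hsplit : A a N = Ap a N + ∑ n ∈ Finset.range N, (if n.Prime then 0 else residueClass a n) / n := by
    rw [Ap, ← Finset.sum_add_distrib]
    refine Finset.sum_congr rfl fun n _ ↦ ?_
    rw [← add_div]
    congr 1
    split_ifs <;> ring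
  rw [hsplit]
  gcongr
  exact Summable.sum_le_tsum _ (fun n _ ↦ div_nonneg (by split_ifs; exacts [le_rfl, residueClass_nonneg a n]) n.cast_nonneg)
    (summable_residueClass_non_primes_div a)

lemma th_mono : Monotone (th a) := by
  intro m n hmn
  exact Finset.sum_le_sum_of_subset_of_nonneg (Finset.range_subset_range.mpr hmn) fun i _ _ ↦ g_nonneg i

section bounds

variable {C : ℝ} (hC : 0 ≤ C)
  (hbd : ∀ {x : ℝ}, x ∈ Set.Ioc (1:ℝ) 2 →
      |(∑' n, residueClass a n / (n : ℝ) ^ x) - (q.totient : ℝ)⁻¹ / (x - 1)| ≤ C)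

include hC hbd

lemma A_upper {N : ℕ} (hN : 3 ≤ N) :
    A a N ≤ 3 * (q.totient : ℝ)⁻¹ * Real.log N + 3 * C := by
  set T : ℝ := (q.totient : ℝ)⁻¹ with hT
  have hT0 : 0 ≤ T := inv_nonneg.mpr (Nat.cast_nonneg _)
  set L : ℝ := Real.log N with hLdef
  have hN0 : (3:ℝ) ≤ (N:ℝ) := by exact_mod_cast hN
  have hL : 1 ≤ L := by
    have h3 : (1:ℝ) ≤ Real.log 3 := by
      rw [Real.le_log_iff_exp_le (by norm_num)]
      calc Real.exp 1 ≤ 2.7182818286 := (Real.exp_one_lt_d9).le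
        _ ≤ 3 := by norm_num
    exact h3.trans (Real.log_le_log (by norm_num) hN0)
  have hL0 : 0 < L := lt_of_lt_of_le one_pos hL
  set x : ℝ := 1 + 1/L with hxdef
  have hx : x ∈ Set.Ioc (1:ℝ) 2 := by
    have h1 : 0 < 1/L := by positivity
    have h2 : 1/L ≤ 1 := by rw [div_le_one hL0]; exact hL
    constructor
    · rw [hxdef]; linarith
    · rw [hxdef]; linarith
  have hx1 : 1 < x := hx.1
  have hterm : ∀ n ∈ Finset.range N,
      residueClass a n / n ≤ Real.exp 1 * (residueClass a n / (n : ℝ) ^ x) := by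
    intro n hn
    rcases Nat.eq_zero_or_pos n with rfl | hn1
    · simp [Real.zero_rpow (by positivity : x ≠ 0)]
    have hn1' : (1:ℝ) ≤ (n:ℝ) := by exact_mod_cast hn1
    have hnN : (n:ℝ) ≤ (N:ℝ) := by
      exact_mod_cast (Finset.mem_range.mp hn).le
    have hc : 0 ≤ residueClass a n := residueClass_nonneg a n
    have hu : (n:ℝ) ^ (1/L) ≤ Real.exp 1 := by
      calc (n:ℝ) ^ (1/L) ≤ (N:ℝ) ^ (1/L) :=
            Real.rpow_le_rpow (by positivity) hnN (by positivity)
        _ = Real.exp 1 := by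
            rw [Real.rpow_def_of_pos (by linarith), ← hLdef, mul_one_div, div_self hL0.ne']
    have hu0 : 0 < (n:ℝ) ^ (1/L) := Real.rpow_pos_of_pos (by linarith) _
    have hxx : (n:ℝ) ^ x = n * (n:ℝ) ^ (1/L) := by
      rw [hxdef, Real.rpow_add (by linarith), Real.rpow_one]
    rw [hxx, div_mul_eq_div_div]
    have h1 : residueClass a n / n / Real.exp 1 ≤ residueClass a n / n / ((n:ℝ)^(1/L)) :=
      div_le_div_of_nonneg_left (by positivity) hu0 hu
    calc residueClass a n / n = Real.exp 1 * (residueClass a n / n / Real.exp 1) := by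
          field_simp
      _ ≤ Real.exp 1 * (residueClass a n / n / ((n:ℝ)^(1/L))) := by
          exact mul_le_mul_of_nonneg_left h1 (Real.exp_pos 1).le
  have hA : A a N ≤ Real.exp 1 * ∑' n, residueClass a n / (n : ℝ) ^ x := by
    calc A a N ≤ ∑ n ∈ Finset.range N, Real.exp 1 * (residueClass a n / (n : ℝ) ^ x) :=
          Finset.sum_le_sum hterm
      _ = Real.exp 1 * ∑ n ∈ Finset.range N, (residueClass a n / (n : ℝ) ^ x) := by
          rw [Finset.mul_sum]
      _ ≤ _ := by
          refine mul_le_mul_of_nonneg_left ?_ (Real.exp_pos 1).le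
          exact Summable.sum_le_tsum _ (fun n _ ↦ div_nonneg (residueClass_nonneg a n)
            (Real.rpow_nonneg n.cast_nonneg x)) (summable_rc a hx1)
  have hF : ∑' n, residueClass a n / (n : ℝ) ^ x ≤ T * L + C := by
    have := (abs_le.mp (hbd hx)).2
    have hx1' : x - 1 = 1/L := by rw [hxdef]; ring
    rw [hx1'] at this
    have : ∑' n, residueClass a n / (n : ℝ) ^ x ≤ T / (1/L) + C := by linarith
    rwa [div_div_eq_mul_div, div_one] at this
  have he : Real.exp 1 ≤ 3 := by
    calc Real.exp 1 ≤ 2.7182818286 := (Real.exp_one_lt_d9).le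
      _ ≤ 3 := by norm_num
  have hFnn : 0 ≤ ∑' n, residueClass a n / (n : ℝ) ^ x :=
    tsum_nonneg fun n ↦ div_nonneg (residueClass_nonneg a n) (Real.rpow_nonneg n.cast_nonneg x)
  calc A a N ≤ Real.exp 1 * ∑' n, residueClass a n / (n : ℝ) ^ x := hA
    _ ≤ 3 * (T * L + C) := by nlinarith
    _ = 3 * T * L + 3 * C := by ring

lemma A_lower {N : ℕ} (hN : 55 ≤ N) :
    (q.totient : ℝ)⁻¹ / 6 * Real.log N - 2 * C ≤ A a N := by
  set T : ℝ := (q.totient : ℝ)⁻¹ with hT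
  have hT0 : 0 ≤ T := inv_nonneg.mpr (Nat.cast_nonneg _)
  set L : ℝ := Real.log N with hLdef
  have hN0 : (55:ℝ) ≤ (N:ℝ) := by exact_mod_cast hN
  have hN1 : (1:ℝ) ≤ (N:ℝ) := by linarith
  have he1 : Real.exp 1 ≤ 2.7182818286 := (Real.exp_one_lt_d9).le
  have he1' : (0:ℝ) < Real.exp 1 := Real.exp_pos 1
  have hL : 4 ≤ L := by
    have h4 : (4:ℝ) ≤ Real.log 55 := by
      rw [Real.le_log_iff_exp_le (by norm_num)]
      have : Real.exp 4 = (Real.exp 1) ^ (4:ℕ) := by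
        rw [← Real.exp_nat_mul]; norm_num
      rw [this]
      have h4' : Real.exp 1 ^ (4:ℕ) ≤ 2.7182818286 ^ (4:ℕ) := pow_le_pow_left₀ he1'.le he1 4
      nlinarith [h4']
    exact h4.trans (Real.log_le_log (by norm_num) hN0)
  have hL0 : 0 < L := by linarith
  set x : ℝ := 1 + 4/L with hxdef
  set x' : ℝ := 1 + 2/L with hx'def
  have hx : x ∈ Set.Ioc (1:ℝ) 2 := by
    have h1 : 0 < 4/L := by positivity
    have h2 : 4/L ≤ 1 := by rw [div_le_one hL0]; exact hL
    exact ⟨by rw [hxdef]; linarith, by rw [hxdef]; linarith⟩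
  have hx' : x' ∈ Set.Ioc (1:ℝ) 2 := by
    have h1 : 0 < 2/L := by positivity
    have h2 : 2/L ≤ 1 := by rw [div_le_one hL0]; linarith
    exact ⟨by rw [hx'def]; linarith, by rw [hx'def]; linarith⟩
  have hsum : Summable fun n : ℕ ↦ residueClass a n / (n : ℝ) ^ x := summable_rc a hx.1
  have hsum' : Summable fun n : ℕ ↦ residueClass a n / (n : ℝ) ^ x' := summable_rc a hx'.1
  have hsplit := Summable.sum_add_tsum_nat_add N hsum
  have hpart : ∑ n ∈ Finset.range N, residueClass a n / (n:ℝ) ^ x ≤ A a N := by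
    refine Finset.sum_le_sum fun n _ ↦ ?_
    rcases Nat.eq_zero_or_pos n with rfl | hn1
    · simp [Real.zero_rpow (by rw [hxdef]; positivity : x ≠ 0)]
    have hn1' : (1:ℝ) ≤ (n:ℝ) := by exact_mod_cast hn1
    have : (n:ℝ) ≤ (n:ℝ) ^ x := by
      calc (n:ℝ) = (n:ℝ) ^ (1:ℝ) := (Real.rpow_one _).symm
        _ ≤ (n:ℝ) ^ x := Real.rpow_le_rpow_of_exponent_le hn1' hx.1.le
    exact div_le_div_of_nonneg_left (residueClass_nonneg a n) (by linarith) this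
  have hE : Real.exp 2 = (N:ℝ) ^ (2/L) := by
    rw [Real.rpow_def_of_pos (by linarith), ← hLdef, mul_div_assoc', mul_comm,
      mul_div_assoc, div_self hL0.ne', mul_one]
  have hE0 : (0:ℝ) < Real.exp 2 := Real.exp_pos 2
  have htail : (∑' n : ℕ, residueClass a (n + N) / ((n + N : ℕ):ℝ) ^ x) ≤
      (Real.exp 2)⁻¹ * ∑' n, residueClass a n / (n : ℝ) ^ x' := by
    have hterm : ∀ n : ℕ, residueClass a (n + N) / ((n + N : ℕ):ℝ) ^ x ≤
        (Real.exp 2)⁻¹ * (residueClass a (n + N) / ((n + N : ℕ):ℝ) ^ x') := by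
      intro n
      have hm1 : (1:ℝ) ≤ ((n + N : ℕ):ℝ) := by
        push_cast; linarith [Nat.cast_nonneg (α := ℝ) n]
      have hmN : (N:ℝ) ≤ ((n + N : ℕ):ℝ) := by
        push_cast; linarith [Nat.cast_nonneg (α := ℝ) n]
      have hm0 : (0:ℝ) < ((n + N : ℕ):ℝ) := by linarith
      have hxx : ((n + N : ℕ):ℝ) ^ x = ((n + N : ℕ):ℝ) ^ x' * ((n + N : ℕ):ℝ) ^ (2/L) := by
        rw [← Real.rpow_add hm0]
        congr 1
        rw [hxdef, hx'def]; ring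
      have hg : Real.exp 2 ≤ ((n + N : ℕ):ℝ) ^ (2/L) := by
        rw [hE]
        exact Real.rpow_le_rpow (by linarith) hmN (by positivity)
      have h0' : (0:ℝ) < ((n + N : ℕ):ℝ) ^ x' := Real.rpow_pos_of_pos hm0 _
      rw [hxx, div_mul_eq_div_div, inv_mul_eq_div, div_div, div_div]
      exact div_le_div_of_nonneg_left (residueClass_nonneg a _) (mul_pos h0' hE0)
        (mul_le_mul_of_nonneg_left hg h0'.le)
    have hs1 : Summable (fun n : ℕ ↦ residueClass a (n + N) / ((n + N : ℕ):ℝ) ^ x) :=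
      (summable_nat_add_iff (f := fun n : ℕ ↦ residueClass a n / (n:ℝ) ^ x) N).mpr hsum
    have hs2 : Summable (fun n : ℕ ↦ residueClass a (n + N) / ((n + N : ℕ):ℝ) ^ x') :=
      (summable_nat_add_iff (f := fun n : ℕ ↦ residueClass a n / (n:ℝ) ^ x') N).mpr hsum'
    refine le_trans (Summable.tsum_le_tsum hterm hs1 (hs2.mul_left _)) ?_
    rw [tsum_mul_left]
    refine mul_le_mul_of_nonneg_left ?_ (by positivity)
    have hsplit' := Summable.sum_add_tsum_nat_add N hsum'
    have hpos : 0 ≤ ∑ n ∈ Finset.range N, residueClass a n / (n:ℝ) ^ x' :=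
      Finset.sum_nonneg fun n _ ↦ div_nonneg (residueClass_nonneg a n)
        (Real.rpow_nonneg n.cast_nonneg _)
    linarith
  have hFlo : T * L / 4 - C ≤ ∑' n, residueClass a n / (n : ℝ) ^ x := by
    have := (abs_le.mp (hbd hx)).1
    have hx1' : x - 1 = 4/L := by rw [hxdef]; ring
    rw [hx1'] at this
    have hq : T / (4/L) = T * L / 4 := by
      field_simp
    linarith [hq ▸ this]
  have hFhi : ∑' n, residueClass a n / (n : ℝ) ^ x' ≤ T * L / 2 + C := by
    have := (abs_le.mp (hbd hx')).2
    have hx1' : x' - 1 = 2/L := by rw [hx'def]; ring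
    rw [hx1'] at this
    have hq : T / (2/L) = T * L / 2 := by field_simp
    linarith [hq ▸ this]
  have hFhi0 : 0 ≤ ∑' n, residueClass a n / (n : ℝ) ^ x' :=
    tsum_nonneg fun n ↦ div_nonneg (residueClass_nonneg a n) (Real.rpow_nonneg n.cast_nonneg _)
  have hEinv : (Real.exp 2)⁻¹ ≤ 1/6 := by
    rw [inv_le_comm₀ hE0 (by norm_num)]
    have : Real.exp 2 = (Real.exp 1) ^ (2:ℕ) := by rw [← Real.exp_nat_mul]; norm_num
    nlinarith [Real.exp_one_gt_d9]
  have hkey : A a N ≥ (T * L / 4 - C) - (Real.exp 2)⁻¹ * (T * L / 2 + C) := by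
    have h1 : ∑ n ∈ Finset.range N, residueClass a n / (n:ℝ) ^ x ≥
        (T * L / 4 - C) - (∑' n : ℕ, residueClass a (n + N) / ((n + N : ℕ):ℝ) ^ x) := by
      push_cast at hsplit ⊢
      linarith
    have h2 : (∑' n : ℕ, residueClass a (n + N) / ((n + N : ℕ):ℝ) ^ x) ≤
        (Real.exp 2)⁻¹ * (T * L / 2 + C) := by
      refine htail.trans (mul_le_mul_of_nonneg_left hFhi (by positivity))
    linarith
  have hEinv0 : 0 ≤ (Real.exp 2)⁻¹ := by positivity
  have hTL : 0 ≤ T * L := by positivity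
  nlinarith [mul_le_mul_of_nonneg_right hEinv (by linarith : (0:ℝ) ≤ T * L / 2 + C)]

lemma gap : ∃ N₁ : ℕ, 2 ≤ N₁ ∧ ∀ N ≥ N₁, ∃ p : ℕ, p.Prime ∧ ((p : ZMod q) = a) ∧ N ≤ p ∧ p < N ^ 19 := by
  set T : ℝ := (q.totient : ℝ)⁻¹ with hT
  have hT0 : 0 < T := by
    rw [hT]
    exact inv_pos.mpr (by exact_mod_cast Nat.totient_pos.mpr q.pos_of_neZero)
  have hev : ∀ᶠ N : ℕ in atTop, 6 * (5 * C + B a) / T < Real.log N :=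
    (Real.tendsto_log_atTop.comp tendsto_natCast_atTop_atTop).eventually_gt_atTop _
  obtain ⟨N₀, hN₀⟩ := eventually_atTop.mp hev
  refine ⟨max N₀ 55, le_trans (by norm_num) (le_max_right _ _), fun N hN ↦ ?_⟩
  have hN55 : 55 ≤ N := le_trans (le_max_right _ _) hN
  have hNlog : 6 * (5 * C + B a) / T < Real.log N := hN₀ N (le_trans (le_max_left _ _) hN)
  have hN19 : 55 ≤ N ^ 19 := hN55.trans (Nat.le_self_pow (by norm_num) N)
  have hlog19 : Real.log (N ^ 19 : ℕ) = 19 * Real.log N := by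
    push_cast
    exact Real.log_pow (N : ℝ) 19
  have h1 : T / 6 * (19 * Real.log N) - 2 * C ≤ A a (N ^ 19) := by
    have := A_lower hC hbd hN19
    rwa [hlog19] at this
  have h2 : A a N ≤ 3 * T * Real.log N + 3 * C := A_upper hC hbd (by omega)
  have hB0 : 0 ≤ B a := B_nonneg
  have hdiff : 0 < Ap a (N ^ 19) - Ap a N := by
    have l1 : A a (N ^ 19) ≤ Ap a (N ^ 19) + B a := A_le_Ap_add_B _
    have l2 : Ap a N ≤ A a N := Ap_le_A _
    have hgt : 0 < T / 6 * Real.log N - (5 * C + B a) := by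
      rw [div_lt_iff₀ hT0] at hNlog
      nlinarith
    nlinarith
  have hsub : Ap a (N ^ 19) - Ap a N =
      ∑ n ∈ Finset.Ico N (N ^ 19), (if n.Prime then residueClass a n else 0) / n := by
    rw [Ap, Ap, Finset.sum_Ico_eq_sub _ (Nat.le_self_pow (by norm_num) N)]
  rw [hsub] at hdiff
  have h0 : ∑ _n ∈ Finset.Ico N (N ^ 19), (0:ℝ) <
      ∑ n ∈ Finset.Ico N (N ^ 19), (if n.Prime then residueClass a n else 0) / n := by
    simpa using hdiff
  obtain ⟨p, hp, hppos⟩ := Finset.exists_lt_of_sum_lt h0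
  rw [Finset.mem_Ico] at hp
  have hprime : p.Prime := by
    by_contra hnp
    simp [hnp] at hppos
  have hcls : (p : ZMod q) = a := by
    by_contra hne
    have : residueClass a p = 0 := by
      simp [residueClass, Set.indicator_apply, hne]
    simp [this] at hppos
  exact ⟨p, hprime, hcls, hp.1, hp.2⟩

lemma th_growth (R : ℝ) : ∃ N₂ : ℕ, ∀ N ≥ N₂, R * Real.log N ≤ th a N := by
  set T : ℝ := (q.totient : ℝ)⁻¹ with hT
  have hT0 : 0 < T := by
    rw [hT]
    exact inv_pos.mpr (by exact_mod_cast Nat.totient_pos.mpr q.pos_of_neZero)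
  have hB0 : 0 ≤ B a := B_nonneg
  obtain ⟨M, hM55, hMT⟩ : ∃ M : ℕ, 55 ≤ M ∧ R + 1 ≤ (M : ℝ) * (T / 6) := by
    refine ⟨max 55 (⌈6 * (R + 1) / T⌉₊ + 1), le_max_left _ _, ?_⟩
    have h1 : 6 * (R + 1) / T ≤ (max 55 (⌈6 * (R + 1) / T⌉₊ + 1) : ℕ) := by
      refine le_trans (Nat.le_ceil _) ?_
      have : (⌈6 * (R + 1) / T⌉₊ : ℝ) ≤ ((⌈6 * (R + 1) / T⌉₊ + 1 : ℕ) : ℝ) := by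
        push_cast; linarith
      refine this.trans ?_
      exact_mod_cast Nat.cast_le.mpr (le_max_right 55 _)
    rw [div_le_iff₀ hT0] at h1
    nlinarith
  set D : ℝ := (M : ℝ) * (5 * C + B a + 3 * T * Real.log M) + 1 with hD
  have hev : ∀ᶠ N : ℕ in atTop, D < Real.log N :=
    (Real.tendsto_log_atTop.comp tendsto_natCast_atTop_atTop).eventually_gt_atTop _
  obtain ⟨N₀, hN₀⟩ := eventually_atTop.mp hev
  refine ⟨max N₀ M, fun N hN ↦ ?_⟩
  have hNM : M ≤ N := le_trans (le_max_right _ _) hN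
  have hN55 : 55 ≤ N := hM55.trans hNM
  have hNlog : D < Real.log N := hN₀ N (le_trans (le_max_left _ _) hN)
  have hM0 : (0:ℝ) < M := by positivity
  have step1 : (M : ℝ) * (Ap a N - Ap a M) ≤ th a N := by
    have e1 : Ap a N - Ap a M =
        ∑ n ∈ Finset.Ico M N, (if n.Prime then residueClass a n else 0) / n := by
      rw [Ap, Ap, Finset.sum_Ico_eq_sub _ hNM]
    rw [e1, Finset.mul_sum]
    have e2 : ∑ n ∈ Finset.Ico M N, (if n.Prime then residueClass a n else 0) ≤ th a N := by
      rw [th]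
      refine Finset.sum_le_sum_of_subset_of_nonneg ?_ fun i _ _ ↦ ?_
      · intro x hx
        rw [Finset.mem_Ico] at hx
        exact Finset.mem_range.mpr hx.2
      · split_ifs
        exacts [residueClass_nonneg a i, le_rfl]
    refine le_trans (Finset.sum_le_sum fun n hn ↦ ?_) e2
    rw [Finset.mem_Ico] at hn
    have hn0 : (0:ℝ) < n := by
      have : 0 < n := lt_of_lt_of_le (by omega) hn.1
      exact_mod_cast this
    have hg0 : 0 ≤ (if n.Prime then residueClass a n else 0) := by
      split_ifs
      exacts [residueClass_nonneg a n, le_rfl]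
    have hMn : (M:ℝ) ≤ n := by exact_mod_cast hn.1
    calc (M:ℝ) * ((if n.Prime then residueClass a n else 0) / n)
        ≤ (n:ℝ) * ((if n.Prime then residueClass a n else 0) / n) :=
          mul_le_mul_of_nonneg_right hMn (div_nonneg hg0 hn0.le)
      _ = (if n.Prime then residueClass a n else 0) := by
          field_simp
  have hlogM0 : 0 ≤ Real.log M := Real.log_natCast_nonneg M
  have hlogN0 : 0 < Real.log N := by
    have : (0:ℝ) < D := by positivity
    linarith
  have step2 : T / 6 * Real.log N - 2 * C - B a - (3 * T * Real.log M + 3 * C) ≤ Ap a N - Ap a M := by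
    have l1 : T / 6 * Real.log N - 2 * C ≤ A a N := A_lower hC hbd hN55
    have l2 : A a N ≤ Ap a N + B a := A_le_Ap_add_B N
    have l3 : Ap a M ≤ A a M := Ap_le_A M
    have l4 : A a M ≤ 3 * T * Real.log M + 3 * C := A_upper hC hbd (by omega)
    linarith
  have hmul : ((R:ℝ) + 1) * Real.log N ≤ (M : ℝ) * (T / 6) * Real.log N :=
    mul_le_mul_of_nonneg_right hMT hlogN0.le
  have hMD : (M:ℝ) * (T / 6 * Real.log N - 2 * C - B a - (3 * T * Real.log M + 3 * C)) ≤
      (M : ℝ) * (Ap a N - Ap a M) := mul_le_mul_of_nonneg_left step2 hM0.le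
  have hexp : (M:ℝ) * (T / 6 * Real.log N - 2 * C - B a - (3 * T * Real.log M + 3 * C)) =
      (M : ℝ) * (T / 6) * Real.log N - (D - 1) := by
    rw [hD]; ring
  linarith [step1, hMD, hmul, hNlog, hexp]

end bounds

lemma g_eq (n : ℕ) : (if n.Prime then residueClass a n else 0) =
    if n.Prime ∧ (n : ZMod q) = a then Real.log n else 0 := by
  by_cases hp : n.Prime
  · by_cases hcl : (n : ZMod q) = a
    · simp only [hp, if_true, hcl, and_true]
      rw [residueClass, Set.indicator_of_mem (show n ∈ {m : ℕ | ((m : ZMod q) = a)} from hcl),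
        vonMangoldt_apply_prime hp]
    · simp only [hp, if_true, hcl, and_false, if_false]
      exact Set.indicator_of_notMem (show n ∉ {m : ℕ | ((m : ZMod q) = a)} from hcl) _
  · simp [hp]

lemma th_nth (hinf : {p : ℕ | p.Prime ∧ (p : ZMod q) = a}.Infinite) (n : ℕ) :
    th a (Nat.nth (fun p : ℕ ↦ p.Prime ∧ (p : ZMod q) = a) n) =
      ∑ i ∈ Finset.range n, Real.log (Nat.nth (fun p : ℕ ↦ p.Prime ∧ (p : ZMod q) = a) i) := by
  classical
  set P : ℕ → Prop := fun p : ℕ ↦ p.Prime ∧ (p : ZMod q) = a with hP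
  have hinf' : (setOf P).Infinite := hinf
  have hth' : ∀ N, th a N = ∑ m ∈ (Finset.range N).filter P, Real.log m := by
    intro N
    rw [th, Finset.sum_filter]
    exact Finset.sum_congr rfl fun m _ ↦ g_eq m
  induction n with
  | zero =>
    rw [hth', Finset.sum_range_zero]
    convert Finset.sum_empty
    refine Finset.eq_empty_of_forall_notMem fun m hm ↦ ?_
    rw [Finset.mem_filter, Finset.mem_range] at hm
    have h1 : Nat.nth P 0 ≤ m := by
      calc Nat.nth P 0 ≤ Nat.nth P (Nat.count P m) := Nat.nth_monotone hinf' (Nat.zero_le _)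
        _ = m := Nat.nth_count hm.2
    omega
  | succ n ih =>
    rw [hth', Nat.filter_range_nth_eq_insert_of_infinite hinf' n, Finset.sum_insert
      (fun hmem ↦ (Finset.mem_range.mp (Finset.mem_filter.mp hmem).1).false),
      Finset.sum_range_succ, ← hth', ih]
    ring

theorem main (ha : IsUnit a) (h : ℕ) (hh : 1 < h) :
    ∃ N : ℕ, 0 < N ∧ ∀ n ≥ N,
      (Nat.nth (fun p ↦ p.Prime ∧ (p : ZMod q) = a) n) ^ h <
        ∏ i ∈ Finset.range n, Nat.nth (fun p ↦ p.Prime ∧ (p : ZMod q) = a) i := by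
  classical
  obtain ⟨C, hC, hbd⟩ := two_sided_bound ha
  obtain ⟨N₁, hN₁2, hgap'⟩ := gap hC hbd
  obtain ⟨N₂, hthg'⟩ := th_growth hC hbd (38 * h + 1 : ℝ)
  set P : ℕ → Prop := fun p : ℕ ↦ p.Prime ∧ (p : ZMod q) = a with hPdef
  have hinf : (setOf P).Infinite := Nat.infinite_setOfPred_prime_and_eq_mod ha
  set Q : ℕ → ℕ := Nat.nth P with hQdef
  have hQmem : ∀ i, P (Q i) := fun i ↦ Nat.nth_mem_of_infinite hinf i
  have hQmono : StrictMono Q := Nat.nth_strictMono hinf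
  have hQ2 : ∀ i, 2 ≤ Q i := fun i ↦ (hQmem i).1.two_le
  have hQge : ∀ i, i ≤ Q i := fun i ↦ hQmono.le_apply
  have hthnth : ∀ n : ℕ, th a (Q n) = ∑ i ∈ Finset.range n, Real.log (Q i) :=
    fun n ↦ th_nth hinf n
  refine ⟨max N₁ N₂ + 1, Nat.succ_pos _, fun n hn ↦ ?_⟩
  obtain ⟨m, rfl⟩ : ∃ m, n = m + 1 := ⟨n - 1, by omega⟩
  have hm : max N₁ N₂ ≤ m := by omega
  have hmN₁ : N₁ ≤ Q m + 1 := by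
    have := hQge m
    omega
  have hmN₂ : N₂ ≤ Q m + 1 := by
    have := hQge m
    omega
  obtain ⟨p, hpp, hpc, hpl, hpu⟩ := hgap' (Q m + 1) hmN₁
  have hQmp : Q m < p := by omega
  have hple : Q (m + 1) ≤ p := by
    have hpP : P p := ⟨hpp, hpc⟩
    have h1 : Nat.nth P (Nat.count P p) = p := Nat.nth_count hpP
    have h2 : m < Nat.count P p := by
      have := hQmp
      rw [← h1] at this
      exact (Nat.nth_lt_nth hinf).mp this
    calc Q (m + 1) ≤ Nat.nth P (Nat.count P p) := Nat.nth_monotone hinf (by omega)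
      _ = p := h1
  have hQbound : Q (m + 1) ≤ Q m ^ 38 := by
    have hx : 2 ≤ Q m := hQ2 m
    have h1 : Q m + 1 ≤ Q m ^ 2 := by
      calc Q m + 1 ≤ 2 * Q m := by omega
        _ ≤ Q m * Q m := Nat.mul_le_mul_right _ hx
        _ = Q m ^ 2 := (pow_two _).symm
    have h2 : (Q m + 1) ^ 19 ≤ (Q m ^ 2) ^ 19 := Nat.pow_le_pow_left h1 19
    rw [← pow_mul] at h2
    calc Q (m + 1) ≤ p := hple
      _ ≤ (Q m + 1) ^ 19 := hpu.le
      _ ≤ Q m ^ (2 * 19) := h2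
      _ = Q m ^ 38 := by norm_num
  have hQm1 : (1:ℝ) < (Q m : ℝ) := by exact_mod_cast hQ2 m
  have hlogQm : (0:ℝ) < Real.log (Q m) := Real.log_pos hQm1
  have hQn0 : (0:ℝ) < (Q (m+1) : ℝ) := by
    have h0 : (0:ℕ) < Q (m+1) := by have := hQ2 (m+1); omega
    exact_mod_cast h0
  have hlog1 : Real.log (Q (m+1)) ≤ 38 * Real.log (Q m) := by
    have hc : ((Q (m+1) : ℕ) : ℝ) ≤ ((Q m ^ 38 : ℕ) : ℝ) := by exact_mod_cast hQbound
    calc Real.log (Q (m+1)) ≤ Real.log ((Q m ^ 38 : ℕ) : ℝ) := by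
          exact Real.log_le_log hQn0 hc
      _ = 38 * Real.log (Q m) := by
          push_cast
          exact Real.log_pow (Q m : ℝ) 38
  have hth1 : (38 * h + 1 : ℝ) * Real.log ((Q m + 1 : ℕ)) ≤ th a (Q m + 1) := hthg' _ hmN₂
  have hth2 : th a (Q m + 1) ≤ th a (Q (m+1)) := th_mono (hQmono (Nat.lt_succ_self m))
  have hlogmono : Real.log (Q m) ≤ Real.log ((Q m + 1 : ℕ)) := by
    refine Real.log_le_log (by linarith) ?_
    push_cast
    linarith
  have hmain : (h:ℝ) * Real.log (Q (m+1)) < ∑ i ∈ Finset.range (m+1), Real.log (Q i) := by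
    have hh1 : (1:ℝ) ≤ (h:ℝ) := by exact_mod_cast hh.le
    have c1 : (h:ℝ) * Real.log (Q (m+1)) ≤ (h:ℝ) * (38 * Real.log (Q m)) :=
      mul_le_mul_of_nonneg_left hlog1 (by linarith)
    have c2 : (h:ℝ) * (38 * Real.log (Q m)) < (38 * h + 1 : ℝ) * Real.log (Q m) := by
      have e : (38 * (h:ℝ) + 1) * Real.log (Q m) =
          (h:ℝ) * (38 * Real.log (Q m)) + Real.log (Q m) := by ring
      linarith
    have c3 : (38 * h + 1 : ℝ) * Real.log (Q m) ≤ (38 * h + 1 : ℝ) * Real.log ((Q m + 1 : ℕ)) := by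
      refine mul_le_mul_of_nonneg_left hlogmono (by positivity)
    have c4 := hthnth (m+1)
    calc (h:ℝ) * Real.log (Q (m+1)) ≤ (h:ℝ) * (38 * Real.log (Q m)) := c1
      _ < (38 * h + 1 : ℝ) * Real.log (Q m) := c2
      _ ≤ (38 * h + 1 : ℝ) * Real.log ((Q m + 1 : ℕ)) := c3
      _ ≤ th a (Q m + 1) := hth1
      _ ≤ th a (Q (m+1)) := hth2
      _ = ∑ i ∈ Finset.range (m+1), Real.log (Q i) := c4
  have hprodpos : 0 < ∏ i ∈ Finset.range (m+1), Q i :=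
    Finset.prod_pos fun i _ ↦ lt_of_lt_of_le (by norm_num) (hQ2 i)
  have hlhspos : 0 < Q (m+1) ^ h := pow_pos (lt_of_lt_of_le (by norm_num) (hQ2 (m+1))) h
  have hlogL : Real.log ((Q (m+1) ^ h : ℕ) : ℝ) = (h:ℝ) * Real.log (Q (m+1)) := by
    push_cast
    exact Real.log_pow _ _
  have hlogR : Real.log ((∏ i ∈ Finset.range (m+1), Q i : ℕ) : ℝ) =
      ∑ i ∈ Finset.range (m+1), Real.log (Q i) := by
    rw [Nat.cast_prod]
    exact Real.log_prod fun i _ ↦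
      Nat.cast_ne_zero.mpr (by have := hQ2 i; omega)
  have hfin : Real.log ((Q (m+1) ^ h : ℕ) : ℝ) <
      Real.log ((∏ i ∈ Finset.range (m+1), Q i : ℕ) : ℝ) := by
    rw [hlogL, hlogR]; exact hmain
  have := (Real.log_lt_log_iff (by exact_mod_cast hlhspos) (by exact_mod_cast hprodpos)).mp hfin
  exact_mod_cast this

end Stmt15

theorem stmt_15 (k l : ℕ) (hl : 1 ≤ l) (hlk : l < k) (hcop : Nat.gcd k l = 1)
    (h : ℕ) (hh : 1 < h) :
    ∃ N : ℕ, 0 < N ∧ ∀ n ≥ N,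
      (Nat.nth (fun p => p.Prime ∧ p % k = l) n) ^ h <
        ∏ i ∈ Finset.range n, Nat.nth (fun p => p.Prime ∧ p % k = l) i := by
  haveI : NeZero k := ⟨by omega⟩
  have ha : IsUnit ((l : ZMod k)) := by
    rw [ZMod.isUnit_iff_coprime]
    rwa [Nat.Coprime, Nat.gcd_comm]
  have hP : (fun p : ℕ => p.Prime ∧ p % k = l) =
      (fun p : ℕ => p.Prime ∧ (p : ZMod k) = ((l : ZMod k))) := by
    funext p
    have hiff : p % k = l ↔ (p : ZMod k) = (l : ZMod k) := by
      rw [ZMod.natCast_eq_natCast_iff, Nat.ModEq, Nat.mod_eq_of_lt hlk]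
    simp only [hiff]
  rw [hP]
  exact Stmt15.main ha h hh
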